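/- arXiv:1401.5881 — 2 statements merged into one kernel-verified Lean document; each statement's English description precedes it below -/
import Mathlib

section
/- Let m be a positive integer, y_1,...,y_m ∈ {0,1} with ∑_k y_k ≤ 1, z ∈ {0,1}, and x a real number. If -∑_k k·y_k ≤ x ≤ ∑_k k·y_k, ∑_k k·y_k - x ≤ 2mz, and ∑_k k·y_k + x ≤ 2m(1-z), then x is an integer with -m ≤ x ≤ m, either x = ∑_k k·y_k or x = -∑_k k·y_k, and x² = ∑_k k²·y_k. -/
/-- Let `m` be a positive integer, `y_1, ..., y_m ∈ {0,1}` with `∑ y_k ≤ 1`, `z ∈ {0,1}`,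
and `x` real. If `-∑ k·y_k ≤ x ≤ ∑ k·y_k`, `∑ k·y_k - x ≤ 2mz` and `∑ k·y_k + x ≤ 2m(1-z)`,
then `x` is an integer with `-m ≤ x ≤ m`, `x = ±∑ k·y_k`, and `x² = ∑ k²·y_k`. -/
theorem stmt4 (m : ℕ) (hm : 0 < m) (y : ℕ → ℝ) (z x : ℝ)
    (hy : ∀ k ∈ Finset.Icc 1 m, y k = 0 ∨ y k = 1)
    (hysum : (∑ k ∈ Finset.Icc 1 m, y k) ≤ 1)
    (hz : z = 0 ∨ z = 1)
    (h1 : -(∑ k ∈ Finset.Icc 1 m, (k : ℝ) * y k) ≤ x)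
    (h2 : x ≤ ∑ k ∈ Finset.Icc 1 m, (k : ℝ) * y k)
    (h3 : (∑ k ∈ Finset.Icc 1 m, (k : ℝ) * y k) - x ≤ 2 * m * z)
    (h4 : (∑ k ∈ Finset.Icc 1 m, (k : ℝ) * y k) + x ≤ 2 * m * (1 - z)) :
    (∃ t : ℤ, x = (t : ℝ)) ∧ -(m : ℝ) ≤ x ∧ x ≤ (m : ℝ) ∧
    (x = ∑ k ∈ Finset.Icc 1 m, (k : ℝ) * y k ∨
      x = -(∑ k ∈ Finset.Icc 1 m, (k : ℝ) * y k)) ∧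
    x ^ 2 = ∑ k ∈ Finset.Icc 1 m, (k : ℝ) ^ 2 * y k := by
  have key : ∃ j : ℕ, j ≤ m ∧ (∑ k ∈ Finset.Icc 1 m, (k : ℝ) * y k) = (j : ℝ) ∧
      (∑ k ∈ Finset.Icc 1 m, (k : ℝ) ^ 2 * y k) = (j : ℝ) ^ 2 := by
    by_cases hall : ∀ k ∈ Finset.Icc 1 m, y k = 0
    · refine ⟨0, Nat.zero_le m, ?_, ?_⟩ <;>
      · rw [Finset.sum_eq_zero (fun k hk => by rw [hall k hk]; ring)]; simp
    · push_neg at hall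
      obtain ⟨j, hj, hyj⟩ := hall
      have hyj1 : y j = 1 := (hy j hj).resolve_left hyj
      have hrest : ∀ k ∈ Finset.Icc 1 m, k ≠ j → y k = 0 := by
        intro k hk hkj
        by_contra h
        have hk1 : y k = 1 := (hy k hk).resolve_left h
        have hsub : ({j, k} : Finset ℕ) ⊆ Finset.Icc 1 m := by
          intro a ha
          simp only [Finset.mem_insert, Finset.mem_singleton] at ha
          rcases ha with rfl | rfl <;> assumption
        have hle : (∑ a ∈ ({j, k} : Finset ℕ), y a) ≤ ∑ a ∈ Finset.Icc 1 m, y a := by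
          apply Finset.sum_le_sum_of_subset_of_nonneg hsub
          intro a ha _
          rcases hy a ha with h0 | h0 <;> simp [h0]
        rw [Finset.sum_pair (Ne.symm hkj)] at hle
        rw [hyj1, hk1] at hle
        linarith
      refine ⟨j, (Finset.mem_Icc.mp hj).2, ?_, ?_⟩
      · rw [Finset.sum_eq_single_of_mem j hj, hyj1, mul_one]
        intro k hk hkj
        rw [hrest k hk hkj]; ring
      · rw [Finset.sum_eq_single_of_mem j hj, hyj1, mul_one]
        intro k hk hkj
        rw [hrest k hk hkj]; ring
  obtain ⟨j, hjm, hSj, hsq⟩ := key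
  have hjmr : (j : ℝ) ≤ (m : ℝ) := Nat.cast_le.mpr hjm
  have hj0 : (0 : ℝ) ≤ (j : ℝ) := Nat.cast_nonneg j
  rw [hSj] at h1 h2 h3 h4 ⊢
  rw [hsq]
  rcases hz with rfl | rfl
  · have hx : x = (j : ℝ) := by linarith
    exact ⟨⟨(j : ℤ), by push_cast [hx]; ring⟩, by linarith, by linarith,
      Or.inl hx, by rw [hx]⟩
  · have hx : x = -(j : ℝ) := by linarith
    exact ⟨⟨-(j : ℤ), by push_cast [hx]; ring⟩, by linarith, by linarith,
      Or.inr hx, by rw [hx]; ring⟩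
end

section
/- Let S = {x ∈ ℤ : -m ≤ x ≤ m} for a positive integer m, and let F be the set of triples (x, y, z) with x ∈ ℝ, y ∈ {0,1}^m, z ∈ {0,1} satisfying: -∑_{k=1}^m k y_k ≤ x ≤ ∑_{k=1}^m k y_k, z ≤ ∑_k y_k ≤ 1, ∑_k k y_k - x ≤ 2mz, and ∑_k k y_k + x ≤ 2m(1-z). Then the projection of F onto the x-coordinate is exactly S, and for every (x,y,z) ∈ F, x² = ∑_{k=1}^m k² y_k. -/
lemma sumind (m j : ℕ) (hj : j ∈ Finset.Icc 1 m) (f : ℕ → ℝ) :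
    ∑ k ∈ Finset.Icc 1 m, f k * (if k = j then (1:ℝ) else 0) = f j := by
  simp [mul_ite, Finset.sum_ite_eq', hj]

lemma aux10 (m : ℕ) (x z : ℝ) (y : ℕ → ℝ)
    (h01 : ∀ k ∈ Finset.Icc 1 m, y k = 0 ∨ y k = 1)
    (hz01 : z = 0 ∨ z = 1)
    (hlb : -(∑ k ∈ Finset.Icc 1 m, (k:ℝ) * y k) ≤ x)
    (hub : x ≤ ∑ k ∈ Finset.Icc 1 m, (k:ℝ) * y k)
    (hzle : z ≤ ∑ k ∈ Finset.Icc 1 m, y k)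
    (hsum1 : ∑ k ∈ Finset.Icc 1 m, y k ≤ 1)
    (hc1 : (∑ k ∈ Finset.Icc 1 m, (k:ℝ) * y k) - x ≤ 2*m*z)
    (hc2 : (∑ k ∈ Finset.Icc 1 m, (k:ℝ) * y k) + x ≤ 2*m*(1-z)) :
    ∃ t : ℤ, -(m:ℤ) ≤ t ∧ t ≤ m ∧ x = t ∧ x^2 = ∑ k ∈ Finset.Icc 1 m, (k:ℝ)^2 * y k := by
  by_cases hall : ∀ k ∈ Finset.Icc 1 m, y k = 0
  · have hs0 : ∑ k ∈ Finset.Icc 1 m, (k:ℝ) * y k = 0 :=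
      Finset.sum_eq_zero fun k hk => by rw [hall k hk, mul_zero]
    have hs2 : ∑ k ∈ Finset.Icc 1 m, (k:ℝ)^2 * y k = 0 :=
      Finset.sum_eq_zero fun k hk => by rw [hall k hk, mul_zero]
    refine ⟨0, by simp, by simp, ?_, ?_⟩
    · rw [hs0] at hlb hub; push_cast; linarith
    · rw [hs0] at hlb hub; rw [hs2]; nlinarith
  · push_neg at hall
    obtain ⟨j, hj, hyj0⟩ := hall
    have hyj : y j = 1 := (h01 j hj).resolve_left hyj0
    have hrest : ∀ k ∈ Finset.Icc 1 m, k ≠ j → y k = 0 := by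
      intro k hk hkj
      rcases h01 k hk with h | h
      · exact h
      · exfalso
        have : y j + y k ≤ ∑ i ∈ Finset.Icc 1 m, y i := by
          refine Finset.add_le_sum (fun i hi => ?_) hj hk (Ne.symm hkj)
          rcases h01 i hi with h' | h' <;> simp [h']
        rw [hyj, h] at this; linarith
    have hs1 : ∑ k ∈ Finset.Icc 1 m, (k:ℝ) * y k = j := by
      rw [Finset.sum_eq_single_of_mem j hj (fun k hk hkj => by rw [hrest k hk hkj, mul_zero]),
        hyj, mul_one]
    have hs2 : ∑ k ∈ Finset.Icc 1 m, (k:ℝ)^2 * y k = (j:ℝ)^2 := by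
      rw [Finset.sum_eq_single_of_mem j hj (fun k hk hkj => by rw [hrest k hk hkj, mul_zero]),
        hyj, mul_one]
    have hjm : j ≤ m := (Finset.mem_Icc.mp hj).2
    have hjmr : (j:ℝ) ≤ m := Nat.cast_le.mpr hjm
    rw [hs1] at hlb hub hc1 hc2
    rcases hz01 with hz | hz
    · subst hz
      have hx : x = (j:ℝ) := by linarith
      exact ⟨(j:ℤ), by omega, by exact_mod_cast hjm, by push_cast; linarith, by rw [hs2, hx]⟩
    · subst hz
      have hx : x = -(j:ℝ) := by linarith
      exact ⟨-(j:ℤ), by simp; exact_mod_cast hjm, by omega,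
        by push_cast; linarith, by rw [hs2, hx]; ring⟩

/-- For `S = {x ∈ ℤ : -m ≤ x ≤ m}` and `F` the set of triples `(x, y, z)` satisfying the
constraints of the reformulation, the projection of `F` onto the `x`-coordinate is
exactly `S`, and every `(x, y, z) ∈ F` satisfies `x² = ∑ k² y_k`. -/
theorem stmt10 (m : ℕ) (hm : 0 < m)
    (F : Set (ℝ × (ℕ → ℝ) × ℝ))
    (hF : F = {p : ℝ × (ℕ → ℝ) × ℝ |
      (∀ k ∈ Finset.Icc 1 m, p.2.1 k = 0 ∨ p.2.1 k = 1) ∧ (p.2.2 = 0 ∨ p.2.2 = 1) ∧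
      -(∑ k ∈ Finset.Icc 1 m, (k : ℝ) * p.2.1 k) ≤ p.1 ∧
      p.1 ≤ ∑ k ∈ Finset.Icc 1 m, (k : ℝ) * p.2.1 k ∧
      p.2.2 ≤ ∑ k ∈ Finset.Icc 1 m, p.2.1 k ∧
      (∑ k ∈ Finset.Icc 1 m, p.2.1 k) ≤ 1 ∧
      (∑ k ∈ Finset.Icc 1 m, (k : ℝ) * p.2.1 k) - p.1 ≤ 2 * m * p.2.2 ∧
      (∑ k ∈ Finset.Icc 1 m, (k : ℝ) * p.2.1 k) + p.1 ≤ 2 * m * (1 - p.2.2)}) :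
    (Prod.fst '' F) = {x : ℝ | ∃ t : ℤ, -(m : ℤ) ≤ t ∧ t ≤ (m : ℤ) ∧ x = (t : ℝ)} ∧
    ∀ p ∈ F, p.1 ^ 2 = ∑ k ∈ Finset.Icc 1 m, (k : ℝ) ^ 2 * p.2.1 k := by
  subst hF
  constructor
  · ext x
    simp only [Set.mem_image, Set.mem_setOf_eq]
    constructor
    · rintro ⟨⟨x', y, z⟩, ⟨h01, hz01, hlb, hub, hzle, hsum1, hc1, hc2⟩, rfl⟩
      obtain ⟨t, h1, h2, h3, _⟩ := aux10 m x' z y h01 hz01 hlb hub hzle hsum1 hc1 hc2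
      exact ⟨t, h1, h2, h3⟩
    · rintro ⟨t, ht1, ht2, rfl⟩
      rcases lt_trichotomy t 0 with ht | ht | ht
      · set j : ℕ := t.natAbs with hjdef
        have hj : j ∈ Finset.Icc 1 m := Finset.mem_Icc.mpr ⟨by omega, by omega⟩
        have hjt : (j:ℝ) = -(t:ℝ) := by
          have : (j:ℤ) = -t := by omega
          exact_mod_cast congrArg (Int.cast : ℤ → ℝ) this
        refine ⟨((t:ℝ), fun k => if k = j then 1 else 0, 1), ?_, rfl⟩
        have e1 : ∑ k ∈ Finset.Icc 1 m, (k:ℝ) * (if k = j then (1:ℝ) else 0) = j :=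
          sumind m j hj _
        have e2 : ∑ k ∈ Finset.Icc 1 m, (if k = j then (1:ℝ) else 0) = 1 := by
          simp [Finset.sum_ite_eq', hj]
        have hjm : (j:ℝ) ≤ m := by
          have : j ≤ m := (Finset.mem_Icc.mp hj).2
          exact_mod_cast this
        refine ⟨fun k _ => by by_cases h : k = j <;> simp [h], Or.inr rfl, ?_, ?_, ?_, ?_, ?_, ?_⟩ <;>
          simp only [e1, e2] <;> linarith
      · refine ⟨((t:ℝ), fun _ => 0, 0), ?_, rfl⟩
        have hm' : (0:ℝ) ≤ m := by positivity
        subst ht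
        refine ⟨fun k _ => Or.inl rfl, Or.inl rfl, ?_, ?_, ?_, ?_, ?_, ?_⟩ <;> simp <;> linarith
      · set j : ℕ := t.natAbs with hjdef
        have hj : j ∈ Finset.Icc 1 m := Finset.mem_Icc.mpr ⟨by omega, by omega⟩
        have hjt : (j:ℝ) = (t:ℝ) := by
          have : (j:ℤ) = t := by omega
          exact_mod_cast congrArg (Int.cast : ℤ → ℝ) this
        refine ⟨((t:ℝ), fun k => if k = j then 1 else 0, 0), ?_, rfl⟩
        have e1 : ∑ k ∈ Finset.Icc 1 m, (k:ℝ) * (if k = j then (1:ℝ) else 0) = j :=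
          sumind m j hj _
        have e2 : ∑ k ∈ Finset.Icc 1 m, (if k = j then (1:ℝ) else 0) = 1 := by
          simp [Finset.sum_ite_eq', hj]
        have hjm : (j:ℝ) ≤ m := by
          have : j ≤ m := (Finset.mem_Icc.mp hj).2
          exact_mod_cast this
        refine ⟨fun k _ => by by_cases h : k = j <;> simp [h], Or.inl rfl, ?_, ?_, ?_, ?_, ?_, ?_⟩ <;>
          simp only [e1, e2] <;> linarith
  · rintro ⟨x, y, z⟩ ⟨h01, hz01, hlb, hub, hzle, hsum1, hc1, hc2⟩
    obtain ⟨t, _, _, _, h4⟩ := aux10 m x z y h01 hz01 hlb hub hzle hsum1 hc1 hc2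
    exact h4
end
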